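/- Let K = ℂ(t), f = t²−1, g = 2t, h = t²+1, and P = ((f−h)(g−h), (f+g)(f−h)(g−h)) on the elliptic curve E: y² = x(x−f²)(x−g²). Then the x-coordinate of 2P equals t⁴ + 2t² + 1 and the y-coordinate of 2P equals −2t⁵ + 2t. -/

import Mathlib

open WeierstrassCurve

private lemma some_congr {F : Type*} [Field F] {W : Affine F} {x₁ y₁ x₂ y₂ : F}
    (h₁ : W.Nonsingular x₁ y₁) (h₂ : W.Nonsingular x₂ y₂) (hx : x₁ = x₂) (hy : y₁ = y₂) :
    Affine.Point.some _ _ h₁ = Affine.Point.some _ _ h₂ := by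
  subst hx; subst hy; rfl

private lemma two_ne_zero_ratfunc : (2 : RatFunc ℂ) ≠ 0 := by
  have h : (2 : RatFunc ℂ) = algebraMap (Polynomial ℂ) (RatFunc ℂ) 2 := by rw [map_ofNat]
  rw [h]
  intro hc
  have h0 : (2 : Polynomial ℂ) = 0 :=
    IsFractionRing.injective (Polynomial ℂ) (RatFunc ℂ) (by rw [map_zero]; exact hc)
  have := congrArg (Polynomial.eval 0) h0
  simp at this

private lemma y_ne_zero :
    ((RatFunc.X ^ 2 - 1 + 2 * RatFunc.X) * ((RatFunc.X ^ 2 - 1) - (RatFunc.X ^ 2 + 1)) *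
      (2 * RatFunc.X - (RatFunc.X ^ 2 + 1)) : RatFunc ℂ) ≠ 0 := by
  have key : ((RatFunc.X ^ 2 - 1 + 2 * RatFunc.X) * ((RatFunc.X ^ 2 - 1) - (RatFunc.X ^ 2 + 1)) *
      (2 * RatFunc.X - (RatFunc.X ^ 2 + 1)) : RatFunc ℂ) =
      algebraMap (Polynomial ℂ) (RatFunc ℂ)
        ((Polynomial.X ^ 2 - 1 + 2 * Polynomial.X) *
          ((Polynomial.X ^ 2 - 1) - (Polynomial.X ^ 2 + 1)) *
          (2 * Polynomial.X - (Polynomial.X ^ 2 + 1))) := by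
    simp only [map_mul, map_sub, map_add, map_pow, map_one, map_ofNat, RatFunc.algebraMap_X]
  rw [key]
  intro hc
  have h0 : ((Polynomial.X ^ 2 - 1 + 2 * Polynomial.X) *
      ((Polynomial.X ^ 2 - 1) - (Polynomial.X ^ 2 + 1)) *
      (2 * Polynomial.X - (Polynomial.X ^ 2 + 1)) : Polynomial ℂ) = 0 :=
    IsFractionRing.injective (Polynomial ℂ) (RatFunc ℂ) (by rw [map_zero]; exact hc)
  have := congrArg (Polynomial.eval 0) h0
  simp at this

open Classical in
/-- Let `K = ℂ(t)`, `f = t² − 1`, `g = 2t`, `h = t² + 1`, and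
`P = ((f−h)(g−h), (f+g)(f−h)(g−h))` on the elliptic curve `E : y² = x(x−f²)(x−g²)`,
i.e. the Weierstrass curve `y² = x³ − (f²+g²)x² + f²g²x`.  Then, computing `2P = P + P`
by the elliptic curve group law, the `x`-coordinate of `2P` equals `t⁴ + 2t² + 1` and
the `y`-coordinate of `2P` equals `−2t⁵ + 2t`. -/
theorem stmt_16 (f g h : RatFunc ℂ)
    (hf : f = RatFunc.X ^ 2 - 1) (hg : g = 2 * RatFunc.X) (hh : h = RatFunc.X ^ 2 + 1)
    (W : WeierstrassCurve (RatFunc ℂ))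
    (hW : W = ⟨0, -(f ^ 2 + g ^ 2), 0, f ^ 2 * g ^ 2, 0⟩)
    (hP : W.toAffine.Nonsingular ((f - h) * (g - h)) ((f + g) * (f - h) * (g - h)))
    (h2P : W.toAffine.Nonsingular (RatFunc.X ^ 4 + 2 * RatFunc.X ^ 2 + 1)
      (-2 * RatFunc.X ^ 5 + 2 * RatFunc.X)) :
    Affine.Point.some _ _ hP + Affine.Point.some _ _ hP = Affine.Point.some _ _ h2P := by
  subst hf; subst hg; subst hh; subst hW
  have hy0 := y_ne_zero
  have hy : ((RatFunc.X ^ 2 - 1 + 2 * RatFunc.X) * ((RatFunc.X ^ 2 - 1) - (RatFunc.X ^ 2 + 1)) *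
      (2 * RatFunc.X - (RatFunc.X ^ 2 + 1)) : RatFunc ℂ) ≠
      Affine.negY ((⟨0, -((RatFunc.X ^ 2 - 1) ^ 2 + (2 * RatFunc.X) ^ 2), 0,
        (RatFunc.X ^ 2 - 1) ^ 2 * (2 * RatFunc.X) ^ 2, 0⟩ :
        WeierstrassCurve (RatFunc ℂ)).toAffine) (((RatFunc.X ^ 2 - 1) - (RatFunc.X ^ 2 + 1)) *
        ((2 * RatFunc.X) - (RatFunc.X ^ 2 + 1)))
        ((RatFunc.X ^ 2 - 1 + 2 * RatFunc.X) * ((RatFunc.X ^ 2 - 1) - (RatFunc.X ^ 2 + 1)) *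
          (2 * RatFunc.X - (RatFunc.X ^ 2 + 1))) := by
    simp only [Affine.negY]
    intro hc
    have h2 : (2 : RatFunc ℂ) * ((RatFunc.X ^ 2 - 1 + 2 * RatFunc.X) *
        ((RatFunc.X ^ 2 - 1) - (RatFunc.X ^ 2 + 1)) *
        (2 * RatFunc.X - (RatFunc.X ^ 2 + 1))) = 0 := by linear_combination hc
    rcases mul_eq_zero.mp h2 with h | h
    · exact two_ne_zero_ratfunc h
    · exact hy0 h
  rw [Affine.Point.add_self_of_Y_ne hy]
  have hslope : Affine.slope ((⟨0, -((RatFunc.X ^ 2 - 1) ^ 2 + (2 * RatFunc.X) ^ 2), 0,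
        (RatFunc.X ^ 2 - 1) ^ 2 * (2 * RatFunc.X) ^ 2, 0⟩ :
        WeierstrassCurve (RatFunc ℂ)).toAffine) (((RatFunc.X ^ 2 - 1) - (RatFunc.X ^ 2 + 1)) *
      ((2 * RatFunc.X) - (RatFunc.X ^ 2 + 1)))
      (((RatFunc.X ^ 2 - 1) - (RatFunc.X ^ 2 + 1)) * ((2 * RatFunc.X) - (RatFunc.X ^ 2 + 1)))
      ((RatFunc.X ^ 2 - 1 + 2 * RatFunc.X) * ((RatFunc.X ^ 2 - 1) - (RatFunc.X ^ 2 + 1)) *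
        (2 * RatFunc.X - (RatFunc.X ^ 2 + 1)))
      ((RatFunc.X ^ 2 - 1 + 2 * RatFunc.X) * ((RatFunc.X ^ 2 - 1) - (RatFunc.X ^ 2 + 1)) *
        (2 * RatFunc.X - (RatFunc.X ^ 2 + 1))) = 2 * RatFunc.X - 2 := by
    rw [Affine.slope_of_Y_ne rfl hy, div_eq_iff (sub_ne_zero.mpr hy)]
    simp only [Affine.negY]
    ring
  apply some_congr
  · rw [Affine.addX, hslope]
    show (2 * RatFunc.X - 2 : RatFunc ℂ) ^ 2 + 0 * _ -
      (-(((RatFunc.X ^ 2 - 1 : RatFunc ℂ)) ^ 2 + (2 * RatFunc.X) ^ 2)) - _ - _ = _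
    ring
  · rw [Affine.addY, Affine.negAddY, Affine.addX, Affine.negY, hslope]
    show -((2 * RatFunc.X - 2 : RatFunc ℂ) * _ + _) - 0 * _ - 0 = _
    ring
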